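/- Let C be an abelian ribbon Ab-category and J an absolutely indecomposable object of C such that every element of the radical of End(J) is nilpotent. Then the categorical trace tr_C vanishes identically on Rad(End(J)). -/

import Mathlib

open CategoryTheory MonoidalCategory

universe v u

variable {C : Type u} [Category.{v} C] [MonoidalCategory C]
  [BraidedCategory C] [RightRigidCategory C]

/-- A twist, making `C` into a ribbon category. -/
class RibbonTwist (C : Type u) [Category.{v} C] [MonoidalCategory C]
    [BraidedCategory C] [RightRigidCategory C] where
  θ : ∀ V : C, V ⟶ V
  θ_isIso : ∀ V : C, IsIso (θ V)
  θ_natural : ∀ {V W : C} (f : V ⟶ W), f ≫ θ W = θ V ≫ f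
  θ_tensor : ∀ V W : C, θ (V ⊗ W) = (θ V ⊗ₘ θ W) ≫ (β_ V W).hom ≫ (β_ W V).hom
  θ_dual : ∀ V : C, θ (Vᘁ) = (θ V)ᘁ

variable [RibbonTwist C]

open RibbonTwist

/-- The morphism `b'_V : 𝟙 ⟶ V* ⊗ V`. -/
noncomputable def coev' (V : C) : 𝟙_ C ⟶ Vᘁ ⊗ V :=
  η_ V (Vᘁ) ≫ (β_ V (Vᘁ)).hom ≫ ((Vᘁ) ◁ θ V)

/-- The morphism `d'_V : V ⊗ V* ⟶ 𝟙`. -/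
noncomputable def ev' (V : C) : V ⊗ (Vᘁ) ⟶ 𝟙_ C :=
  (θ V ▷ (Vᘁ)) ≫ (β_ V (Vᘁ)).hom ≫ ε_ V (Vᘁ)

/-- The left partial trace `tr_L`. -/
noncomputable def trL {V W : C} (f : V ⊗ W ⟶ V ⊗ W) : W ⟶ W :=
  (λ_ W).inv ≫ (coev' V ▷ W) ≫ (α_ _ _ _).hom ≫ ((Vᘁ) ◁ f) ≫
    (α_ _ _ _).inv ≫ ((ε_ V (Vᘁ)) ▷ W) ≫ (λ_ W).hom

/-- The right partial trace `tr_R`. -/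
noncomputable def trR {V W : C} (f : V ⊗ W ⟶ V ⊗ W) : V ⟶ V :=
  (ρ_ V).inv ≫ (V ◁ η_ W (Wᘁ)) ≫ (α_ _ _ _).inv ≫ (f ▷ (Wᘁ)) ≫
    (α_ _ _ _).hom ≫ (V ◁ ev' W) ≫ (ρ_ V).hom

/-- The categorical trace. -/
noncomputable def trC {V : C} (f : V ⟶ V) : 𝟙_ C ⟶ 𝟙_ C :=
  η_ V (Vᘁ) ≫ (f ▷ (Vᘁ)) ≫ ev' V

/-- `InI V U` : `U` belongs to the ideal `I_V` generated by `V`, i.e. `U` is a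
retract of `V ⊗ W` for some `W`. -/
def InI (V U : C) : Prop :=
  ∃ (W : C) (α : U ⟶ V ⊗ W) (β : V ⊗ W ⟶ U), α ≫ β = 𝟙 U

/-- A full subcategory (given by a predicate on objects) is an ideal if it is closed
under tensoring with arbitrary objects and under retracts. -/
structure IsIdeal (P : C → Prop) : Prop where
  tensor_mem : ∀ {V : C}, P V → ∀ W : C, P (V ⊗ W)
  retract_mem : ∀ {V W : C}, P V → ∀ (f : W ⟶ V) (g : V ⟶ W), f ≫ g = 𝟙 W → P W




section Aux

open Limits ZeroObject

lemma zero_whiskerRight_eq_zero [Abelian C] {A B : C} (W : C) :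
    (0 : A ⟶ B) ▷ W = 0 := by
  have h0 : (0 : A ⟶ B) = (0 : A ⟶ (0 : C)) ≫ (0 : (0 : C) ⟶ B) := by simp
  have hz : ((0 : (0 : C) ⟶ B) ▷ W) = 0 := by
    apply (tensorRightHomEquiv (0 : C) W (Wᘁ) (B ⊗ W)).injective
    exact (Limits.isZero_zero C).eq_of_src _ _
  rw [h0, comp_whiskerRight, hz, Limits.comp_zero]

/-- Cyclicity of the categorical trace. -/
lemma trC_cyclic {X Y : C} (v : X ⟶ Y) (u : Y ⟶ X) :
    trC (v ≫ u) = trC (u ≫ v) := by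
  have key : ∀ (v' : X ⟶ Y),
      η_ X (Xᘁ) ≫ (v' ▷ (Xᘁ)) ≫ (u ▷ (Xᘁ)) ≫ (β_ X (Xᘁ)).hom ≫ ε_ X (Xᘁ) =
      η_ Y (Yᘁ) ≫ (u ▷ (Yᘁ)) ≫ (v' ▷ (Yᘁ)) ≫ (β_ Y (Yᘁ)).hom ≫ ε_ Y (Yᘁ) := by
    intro v'
    rw [BraidedCategory.braiding_naturality_left_assoc,
      ← rightAdjointMate_comp_evaluation,
      ← BraidedCategory.braiding_naturality_right_assoc,
      ← whisker_exchange_assoc,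
      coevaluation_comp_rightAdjointMate_assoc]
  have hθ : v ≫ u ≫ θ X = (v ≫ θ Y) ≫ u := by
    rw [Category.assoc, θ_natural u]
  show η_ X (Xᘁ) ≫ ((v ≫ u) ▷ (Xᘁ)) ≫ ev' X = η_ Y (Yᘁ) ≫ ((u ≫ v) ▷ (Yᘁ)) ≫ ev' Y
  unfold ev'
  calc η_ X (Xᘁ) ≫ ((v ≫ u) ▷ (Xᘁ)) ≫ (θ X ▷ (Xᘁ)) ≫ (β_ X (Xᘁ)).hom ≫ ε_ X (Xᘁ)
      = η_ X (Xᘁ) ≫ ((v ≫ θ Y) ▷ (Xᘁ)) ≫ (u ▷ (Xᘁ)) ≫ (β_ X (Xᘁ)).hom ≫ ε_ X (Xᘁ) := by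
        simp only [comp_whiskerRight, Category.assoc]
        rw [← comp_whiskerRight_assoc u (θ X), θ_natural u, comp_whiskerRight_assoc]
    _ = η_ Y (Yᘁ) ≫ (u ▷ (Yᘁ)) ≫ ((v ≫ θ Y) ▷ (Yᘁ)) ≫ (β_ Y (Yᘁ)).hom ≫ ε_ Y (Yᘁ) :=
        key (v ≫ θ Y)
    _ = η_ Y (Yᘁ) ≫ ((u ≫ v) ▷ (Yᘁ)) ≫ (θ Y ▷ (Yᘁ)) ≫ (β_ Y (Yᘁ)).hom ≫ ε_ Y (Yᘁ) := by
        simp only [comp_whiskerRight, Category.assoc]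

lemma trC_zero [Abelian C] (X : C) : trC (0 : X ⟶ X) = 0 := by
  unfold trC
  rw [zero_whiskerRight_eq_zero]
  simp

lemma pow_fac [Abelian C] {X I : C} (p : X ⟶ I) (i : I ⟶ X) (g : End I) (f : End X)
    (hg : (g : I ⟶ I) = i ≫ p) (hf : (f : X ⟶ X) = p ≫ i) :
    ∀ m : ℕ, p ≫ ((g ^ m : End I) : I ⟶ I) ≫ i = ((f ^ (m + 1) : End X) : X ⟶ X) := by
  intro m
  induction m with
  | zero =>
      show p ≫ ((g ^ 0 : End I) : I ⟶ I) ≫ i = ((f ^ 1 : End X) : X ⟶ X)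
      rw [pow_zero, pow_one, End.one_def, hf]
      simp
  | succ m ih =>
      show p ≫ ((g ^ (m + 1) : End I) : I ⟶ I) ≫ i = ((f ^ (m + 2) : End X) : X ⟶ X)
      rw [pow_succ g m, End.mul_def]
      nth_rewrite 1 [hg]
      calc p ≫ ((i ≫ p) ≫ ((g ^ m : End I) : I ⟶ I)) ≫ i
          = (p ≫ i) ≫ (p ≫ ((g ^ m : End I) : I ⟶ I) ≫ i) := by
            simp only [Category.assoc]
        _ = (f : X ⟶ X) ≫ ((f ^ (m + 1) : End X) : X ⟶ X) := by rw [ih, hf]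
        _ = ((f ^ (m + 2) : End X) : X ⟶ X) := by
            rw [pow_succ f (m + 1), End.mul_def]

lemma trC_zero_of_pow [Abelian C] :
    ∀ (n : ℕ) (X : C) (f : End X), f ^ n = 0 → trC (f : X ⟶ X) = 0 := by
  intro n
  induction n with
  | zero =>
      intro X f h
      rw [pow_zero] at h
      have hf : (f : X ⟶ X) = 0 := by
        rw [← Category.comp_id (f : X ⟶ X), ← End.one_def, h]
        exact Limits.comp_zero
      rw [hf]; exact trC_zero X
  | succ n ih =>
      intro X f h
      set p := Abelian.factorThruImage (f : X ⟶ X) with hp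
      set i := Abelian.image.ι (f : X ⟶ X) with hi
      have hfac : p ≫ i = (f : X ⟶ X) := Abelian.image.fac (f : X ⟶ X)
      set g : End (Abelian.image (f : X ⟶ X)) := i ≫ p with hgdef
      have h2 : p ≫ ((g ^ n : End _) : _ ⟶ _) ≫ i = 0 := by
        rw [pow_fac p i g f hgdef hfac.symm n]
        exact h
      have hg : g ^ n = 0 := by
        have h3 : ((g ^ n : End _) : _ ⟶ _) ≫ i = 0 := by
          rw [← cancel_epi p]
          simpa using h2
        rw [← cancel_mono i]
        simpa using h3
      have := ih (Abelian.image (f : X ⟶ X)) g hg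
      calc trC (f : X ⟶ X) = trC (p ≫ i) := by rw [hfac]
        _ = trC (i ≫ p) := trC_cyclic p i
        _ = 0 := this

end Aux

theorem stmt8 [Abelian C] (hK : IsField (End (𝟙_ C))) (J : C)
    (χ : End J →+* End (𝟙_ C)) (hsurj : Function.Surjective χ)
    (hnil : ∀ f : End J, χ f = 0 → IsNilpotent f) :
    ∀ f : End J, χ f = 0 → trC f = 0 := by
  intro f hf
  obtain ⟨n, hn⟩ := hnil f hf
  exact trC_zero_of_pow n J f hn
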